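/- arXiv:1309.0152 — 2 statements merged into one kernel-verified Lean document; each statement's English description precedes it below -/
import Mathlib

section
/- Let 1 ≤ p < ∞ and let A induce a bounded operator L_A : ℓ_1(F̂) → ℓ_p, with ā_{nk} = Σ_{j=k}^∞ (f_{j+1}^2/(f_k f_{k+1})) a_{nj}. Then the Hausdorff measure of noncompactness of L_A equals lim_{m→∞} sup_k (Σ_{n=m}^∞ |ā_{nk}|^p)^{1/p}, and consequently L_A is compact if and only if lim_{m→∞} sup_k (Σ_{n=m}^∞ |ā_{nk}|^p)^{1/p} = 0. -/
open scoped BigOperators ENNReal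
open Filter Topology

noncomputable def fibr (n : ℕ) : ℝ := (Nat.fib (n + 1) : ℝ)

lemma fibr_pos (n : ℕ) : 0 < fibr n := by
  simpa [fibr] using Nat.cast_pos.mpr (Nat.fib_pos.mpr (Nat.succ_pos n))

noncomputable def Fhat (x : ℕ → ℝ) : ℕ → ℝ
  | 0 => x 0
  | (n + 1) => fibr (n + 1) / fibr (n + 2) * x (n + 1) - fibr (n + 2) / fibr (n + 1) * x n

lemma Fhat_add (x y : ℕ → ℝ) : Fhat (x + y) = Fhat x + Fhat y := by
  funext n; cases n <;> simp [Fhat] <;> ring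

lemma Fhat_smul (c : ℝ) (x : ℕ → ℝ) : Fhat (c • x) = c • Fhat x := by
  funext n; cases n <;> simp [Fhat] <;> ring

noncomputable def FhatL : (ℕ → ℝ) →ₗ[ℝ] (ℕ → ℝ) where
  toFun := Fhat
  map_add' := Fhat_add
  map_smul' := Fhat_smul

lemma Fhat_inj : Function.Injective Fhat := by
  have h0 : ∀ x : ℕ → ℝ, Fhat x = 0 → x = 0 := by
    intro x hx
    funext n
    induction n with
    | zero => simpa [Fhat] using congrFun hx 0
    | succ n ih =>
        have h := congrFun hx (n + 1)
        simp only [Fhat, ih, Pi.zero_apply, mul_zero, sub_zero] at h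
        have h1 : fibr (n + 1) / fibr (n + 2) ≠ 0 :=
          div_ne_zero (fibr_pos _).ne' (fibr_pos _).ne'
        simpa [Pi.zero_apply] using (mul_eq_zero.mp h).resolve_left h1
  have : Function.Injective FhatL := (injective_iff_map_eq_zero' FhatL).mpr
    (fun x => ⟨fun h => h0 x h, fun h => by simp [FhatL, h]; funext n; cases n <;> simp [Fhat]⟩)
  exact this

noncomputable def FhatLP : PreLp (fun _ : ℕ => ℝ) →ₗ[ℝ] PreLp (fun _ : ℕ => ℝ) where
  toFun x := Fhat x
  map_add' x y := Fhat_add x y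
  map_smul' c x := Fhat_smul c x

noncomputable def ellF (p : ℝ≥0∞) : Submodule ℝ (PreLp (fun _ : ℕ => ℝ)) :=
  (lpSubmodule ℝ (fun _ : ℕ => ℝ) p).comap FhatLP

instance (p : ℝ≥0∞) : CoeOut (ellF p) (ℕ → ℝ) := ⟨fun x => (x : PreLp (fun _ : ℕ => ℝ))⟩

noncomputable def ellFtoLp (p : ℝ≥0∞) : ellF p →ₗ[ℝ] lp (fun _ : ℕ => ℝ) p where
  toFun x := ⟨Fhat (x : ℕ → ℝ), x.2⟩
  map_add' x y := Subtype.ext (Fhat_add (x : ℕ → ℝ) (y : ℕ → ℝ))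
  map_smul' c x := Subtype.ext (Fhat_smul c (x : ℕ → ℝ))

lemma ellFtoLp_inj (p : ℝ≥0∞) : Function.Injective (ellFtoLp p) := by
  intro x y h
  have h2 : Fhat (x : ℕ → ℝ) = Fhat (y : ℕ → ℝ) := congrArg Subtype.val h
  exact Subtype.ext (Fhat_inj h2)

noncomputable instance (p : ℝ≥0∞) [Fact (1 ≤ p)] : NormedAddCommGroup (ellF p) :=
  NormedAddCommGroup.induced _ _ (ellFtoLp p) (ellFtoLp_inj p)

noncomputable instance (p : ℝ≥0∞) [Fact (1 ≤ p)] : NormedSpace ℝ (ellF p) :=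
  NormedSpace.induced _ _ _ (ellFtoLp p)

noncomputable def abar (a : ℕ → ℝ) (k : ℕ) : ℝ :=
  ∑' j : ℕ, (fibr (k + j + 1)) ^ 2 / (fibr k * fibr (k + 1)) * a (k + j)

noncomputable def hmnc {X : Type*} [MetricSpace X] (Q : Set X) : ℝ :=
  sInf {ε : ℝ | 0 < ε ∧ ∃ s : Finset X, Q ⊆ ⋃ x ∈ s, Metric.ball x ε}



instance factOne : Fact ((1 : ℝ≥0∞) ≤ 1) := ⟨le_rfl⟩

section Aux

lemma fibr_one_le (n : ℕ) : 1 ≤ fibr n := by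
  have : 0 < Nat.fib (n + 1) := Nat.fib_pos.mpr (Nat.succ_pos n)
  unfold fibr
  exact_mod_cast Nat.succ_le_of_lt this

lemma fibr_zero : fibr 0 = 1 := by simp [fibr]
lemma fibr_one : fibr 1 = 1 := by simp [fibr]

/-- explicit inverse of `Fhat`. -/
noncomputable def Ginv (y : ℕ → ℝ) (k : ℕ) : ℝ :=
  fibr (k + 1) ^ 2 * ∑ i ∈ Finset.range (k + 1), y i / (fibr i * fibr (i + 1))

lemma Fhat_Ginv (y : ℕ → ℝ) : Fhat (Ginv y) = y := by
  funext n
  cases n with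
  | zero => simp [Fhat, Ginv, fibr_zero, fibr_one]
  | succ n =>
    have h1 : fibr (n + 1) ≠ 0 := (fibr_pos (n + 1)).ne'
    have h2 : fibr (n + 2) ≠ 0 := (fibr_pos (n + 2)).ne'
    show fibr (n + 1) / fibr (n + 2) * Ginv y (n + 1) -
        fibr (n + 2) / fibr (n + 1) * Ginv y n = y (n + 1)
    rw [Ginv, Ginv, Finset.sum_range_succ (n := n + 1)]
    set S := ∑ i ∈ Finset.range (n + 1), y i / (fibr i * fibr (i + 1)) with hS
    field_simp
    ring

lemma Ginv_Fhat (x : ℕ → ℝ) : Ginv (Fhat x) = x :=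
  Fhat_inj (by rw [Fhat_Ginv])

end Aux
section KeyId

lemma col_summable {a : ℕ → ℝ}
    (h : Summable fun j : ℕ => |fibr (0 + j + 1) ^ 2 / (fibr 0 * fibr 1) * a (0 + j)|) :
    Summable fun k : ℕ => fibr (k + 1) ^ 2 * |a k| := by
  refine h.congr fun j => ?_
  simp only [Nat.zero_add, fibr_zero, fibr_one, mul_one, div_one]
  rw [abs_mul, abs_of_nonneg (by positivity : (0:ℝ) ≤ fibr (j + 1) ^ 2)]

lemma abar_eq (a : ℕ → ℝ) (k : ℕ) :
    abar a k = (fibr k * fibr (k + 1))⁻¹ * ∑' j : ℕ, fibr (k + j + 1) ^ 2 * a (k + j) := by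
  rw [abar, ← tsum_mul_left]
  exact tsum_congr fun j => by rw [div_mul_eq_mul_div, div_eq_inv_mul]

lemma key_id (a : ℕ → ℝ) {y : ℕ → ℝ}
    (ha : ∀ k : ℕ, Summable fun j : ℕ =>
      |fibr (k + j + 1) ^ 2 / (fibr k * fibr (k + 1)) * a (k + j)|)
    (hy : Summable fun i : ℕ => |y i|) :
    ∑' k : ℕ, a k * Ginv y k = ∑' i : ℕ, abar a i * y i := by
  classical
  set g : ℕ × ℕ → ℝ := fun q =>
    if q.2 ≤ q.1 then y q.2 / (fibr q.2 * fibr (q.2 + 1)) * (fibr (q.1 + 1) ^ 2 * a q.1) else 0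
    with hg
  have hcol : Summable fun k : ℕ => fibr (k + 1) ^ 2 * |a k| := col_summable (ha 0)
  have hbound : Summable fun q : ℕ × ℕ => (fibr (q.1 + 1) ^ 2 * |a q.1|) * |y q.2| :=
    hcol.mul_of_nonneg hy (fun k => by positivity) (fun i => abs_nonneg _)
  have hgs : Summable g := by
    refine Summable.of_norm_bounded hbound fun q => ?_
    rw [Real.norm_eq_abs]
    by_cases h : q.2 ≤ q.1
    · have hc1 : (1:ℝ) ≤ fibr q.2 * fibr (q.2 + 1) := by
        have := fibr_one_le q.2; have := fibr_one_le (q.2 + 1); nlinarith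
      have hc0 : (0:ℝ) < fibr q.2 * fibr (q.2 + 1) := by positivity
      simp only [hg, if_pos h]
      rw [abs_mul, abs_div, abs_of_pos hc0,
        abs_mul, abs_of_nonneg (by positivity : (0:ℝ) ≤ fibr (q.1 + 1) ^ 2)]
      calc |y q.2| / (fibr q.2 * fibr (q.2 + 1)) * (fibr (q.1 + 1) ^ 2 * |a q.1|)
          ≤ |y q.2| * (fibr (q.1 + 1) ^ 2 * |a q.1|) := by
            refine mul_le_mul_of_nonneg_right ?_ (by positivity)
            exact div_le_self (abs_nonneg _) hc1
        _ = fibr (q.1 + 1) ^ 2 * |a q.1| * |y q.2| := by ring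
    · simp only [hg, if_neg h, abs_zero]
      positivity
  have hI : ∀ k, ∑' i, g (k, i) = a k * Ginv y k := by
    intro k
    have hvan : ∀ i, i ∉ Finset.range (k + 1) → g (k, i) = 0 := by
      intro i hi
      simp only [Finset.mem_range] at hi
      have : ¬(i ≤ k) := by omega
      simp [hg, this]
    rw [tsum_eq_sum hvan]
    have e2 : ∀ i ∈ Finset.range (k + 1), g (k, i)
        = y i / (fibr i * fibr (i + 1)) * (fibr (k + 1) ^ 2 * a k) := by
      intro i hi
      simp only [Finset.mem_range] at hi
      simp [hg, Nat.lt_succ_iff.mp hi]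
    rw [Finset.sum_congr rfl e2, ← Finset.sum_mul, Ginv]
    ring
  have hK : ∀ i, ∑' k, g (k, i) = abar a i * y i := by
    intro i
    have hsum_i : Summable fun k => g (k, i) := hgs.prod_symm.prod_factor i
    have hvan : ∑ k ∈ Finset.range i, g (k, i) = 0 := by
      refine Finset.sum_eq_zero fun k hk => ?_
      simp only [Finset.mem_range] at hk
      have : ¬(i ≤ k) := by omega
      simp [hg, this]
    rw [← Summable.sum_add_tsum_nat_add i hsum_i, hvan, zero_add]
    have e3 : ∀ k, g (k + i, i)
        = y i / (fibr i * fibr (i + 1)) * (fibr (i + k + 1) ^ 2 * a (i + k)) := by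
      intro k
      simp only [hg, if_pos (Nat.le_add_left i k)]
      rw [Nat.add_comm k i]
    rw [tsum_congr e3, tsum_mul_left, abar_eq]
    ring
  calc ∑' k : ℕ, a k * Ginv y k
      = ∑' (k : ℕ) (i : ℕ), g (k, i) := (tsum_congr hI).symm
    _ = ∑' (i : ℕ) (k : ℕ), g (k, i) := by
          have hunc : Summable (Function.uncurry fun (k i : ℕ) => g (k, i)) :=
            hgs.congr fun q => by cases q; rfl
          exact (Summable.tsum_comm (f := fun (k i : ℕ) => g (k, i)) hunc).symm
    _ = ∑' i, abar a i * y i := tsum_congr hK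

end KeyId
section LpAux

variable {P : ℝ≥0∞} [Fact (1 ≤ P)]

lemma lp_eval_continuous (n : ℕ) : Continuous fun z : lp (fun _ : ℕ => ℝ) P => (z : ℕ → ℝ) n := by
  have hP0 : P ≠ 0 := (lt_of_lt_of_le zero_lt_one (Fact.out : 1 ≤ P)).ne'
  refine (LipschitzWith.of_dist_le_mul (K := 1) ?_).continuous
  intro z w
  simp only [NNReal.coe_one, one_mul, dist_eq_norm]
  have h := lp.norm_apply_le_norm hP0 (z - w) n
  rwa [lp.coeFn_sub, Pi.sub_apply] at h

lemma memℓp_shift (hP : 0 < P.toReal) (z : lp (fun _ : ℕ => ℝ) P) (m : ℕ) :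
    Memℓp (fun n => (z : ℕ → ℝ) (m + n)) P := by
  apply memℓp_gen
  have h := (memℓp_gen_iff hP).mp (lp.memℓp z)
  exact h.comp_injective (add_right_injective m)

noncomputable def shf (hP : 0 < P.toReal) (m : ℕ) (z : lp (fun _ : ℕ => ℝ) P) :
    lp (fun _ : ℕ => ℝ) P :=
  ⟨fun n => (z : ℕ → ℝ) (m + n), memℓp_shift hP z m⟩

lemma shf_apply (hP : 0 < P.toReal) (m : ℕ) (z : lp (fun _ : ℕ => ℝ) P) (n : ℕ) :
    (shf hP m z : ℕ → ℝ) n = (z : ℕ → ℝ) (m + n) := rfl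

lemma norm_shf (hP : 0 < P.toReal) (m : ℕ) (z : lp (fun _ : ℕ => ℝ) P) :
    ‖shf hP m z‖ = (∑' n : ℕ, ‖(z : ℕ → ℝ) (m + n)‖ ^ P.toReal) ^ (1 / P.toReal) :=
  lp.norm_eq_tsum_rpow hP _

lemma shf_sub (hP : 0 < P.toReal) (m : ℕ) (z w : lp (fun _ : ℕ => ℝ) P) :
    shf hP m (z - w) = shf hP m z - shf hP m w := by
  apply Subtype.ext
  funext n
  have h1 : ((shf hP m z - shf hP m w : lp (fun _ : ℕ => ℝ) P) : ℕ → ℝ) n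
      = (shf hP m z : ℕ → ℝ) n - (shf hP m w : ℕ → ℝ) n := by
    rw [lp.coeFn_sub, Pi.sub_apply]
  have h2 : ((z - w : lp (fun _ : ℕ => ℝ) P) : ℕ → ℝ) (m + n)
      = (z : ℕ → ℝ) (m + n) - (w : ℕ → ℝ) (m + n) := by
    rw [lp.coeFn_sub, Pi.sub_apply]
  show (shf hP m (z - w) : ℕ → ℝ) n = _
  rw [shf_apply, h2]
  exact (h1.trans (by rw [shf_apply, shf_apply])).symm

lemma summable_norm_rpow (hP : 0 < P.toReal) (z : lp (fun _ : ℕ => ℝ) P) :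
    Summable fun n : ℕ => ‖(z : ℕ → ℝ) n‖ ^ P.toReal :=
  (memℓp_gen_iff hP).mp (lp.memℓp z)

lemma norm_shf_le (hP : 0 < P.toReal) (m : ℕ) (z : lp (fun _ : ℕ => ℝ) P) :
    ‖shf hP m z‖ ≤ ‖z‖ := by
  rw [norm_shf hP, lp.norm_eq_tsum_rpow hP z]
  refine Real.rpow_le_rpow (tsum_nonneg fun n => by positivity) ?_ (by positivity)
  refine Summable.tsum_le_tsum_of_inj (fun n : ℕ => m + n) (add_right_injective m)
    (fun c _ => by positivity) (fun n => le_rfl) ?_ (summable_norm_rpow hP z)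
  exact (summable_norm_rpow hP z).comp_injective (add_right_injective m)

lemma tendsto_tail_zero (hP : 0 < P.toReal) (z : lp (fun _ : ℕ => ℝ) P) :
    Tendsto (fun m : ℕ => ∑' n : ℕ, ‖(z : ℕ → ℝ) (m + n)‖ ^ P.toReal) atTop (𝓝 0) := by
  have h := tendsto_sum_nat_add fun n : ℕ => ‖(z : ℕ → ℝ) n‖ ^ P.toReal
  refine h.congr fun m => tsum_congr fun n => by rw [Nat.add_comm]

noncomputable def truncF (hP : 0 < P.toReal) {m : ℕ} (v : Fin m → ℝ) :
    lp (fun _ : ℕ => ℝ) P :=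
  ⟨fun n => if h : n < m then v ⟨n, h⟩ else 0, by
    apply memℓp_gen
    apply summable_of_ne_finset_zero (s := Finset.range m)
    intro n hn
    simp only [Finset.mem_range] at hn
    rw [dif_neg hn, norm_zero, Real.zero_rpow hP.ne']⟩

lemma truncF_apply (hP : 0 < P.toReal) {m : ℕ} (v : Fin m → ℝ) (n : ℕ) :
    (truncF hP v : ℕ → ℝ) n = if h : n < m then v ⟨n, h⟩ else 0 := rfl

noncomputable def truncL (hP : 0 < P.toReal) (m : ℕ) :
    (Fin m → ℝ) →ₗ[ℝ] lp (fun _ : ℕ => ℝ) P where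
  toFun := truncF hP
  map_add' v w := by
    apply Subtype.ext
    funext n
    have h1 : ((truncF hP v + truncF hP w : lp (fun _ : ℕ => ℝ) P) : ℕ → ℝ) n
        = (truncF hP v : ℕ → ℝ) n + (truncF hP w : ℕ → ℝ) n := by
      rw [lp.coeFn_add, Pi.add_apply]
    show (truncF hP (v + w) : ℕ → ℝ) n = _
    rw [h1, truncF_apply, truncF_apply, truncF_apply]
    by_cases h : n < m <;> simp [h]
  map_smul' c v := by
    apply Subtype.ext
    funext n
    have h1 : ((c • truncF hP v : lp (fun _ : ℕ => ℝ) P) : ℕ → ℝ) n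
        = c • (truncF hP v : ℕ → ℝ) n := by
      rw [lp.coeFn_smul, Pi.smul_apply]
    show (truncF hP (c • v) : ℕ → ℝ) n = _
    rw [RingHom.id_apply, h1, truncF_apply, truncF_apply]
    by_cases h : n < m <;> simp [h]

lemma truncL_apply (hP : 0 < P.toReal) (m : ℕ) (v : Fin m → ℝ) (n : ℕ) :
    (truncL hP m v : ℕ → ℝ) n = if h : n < m then v ⟨n, h⟩ else 0 := rfl

lemma norm_sub_trunc (hP : 0 < P.toReal) (m : ℕ) (z : lp (fun _ : ℕ => ℝ) P) :
    ‖z - truncL hP m (fun i : Fin m => (z : ℕ → ℝ) i)‖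
      = (∑' n : ℕ, ‖(z : ℕ → ℝ) (m + n)‖ ^ P.toReal) ^ (1 / P.toReal) := by
  rw [lp.norm_eq_tsum_rpow hP]
  congr 1
  have hcoe : ∀ n, ‖((z - truncL hP m fun i : Fin m => (z : ℕ → ℝ) i :
      lp (fun _ : ℕ => ℝ) P) : ℕ → ℝ) n‖ ^ P.toReal
      = if n < m then 0 else ‖(z : ℕ → ℝ) n‖ ^ P.toReal := by
    intro n
    rw [lp.coeFn_sub, Pi.sub_apply, truncL_apply]
    by_cases h : n < m
    · simp [h, Real.zero_rpow hP.ne']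
    · simp [h]
  rw [tsum_congr hcoe]
  have hsummable : Summable fun n : ℕ => if n < m then 0 else ‖(z : ℕ → ℝ) n‖ ^ P.toReal := by
    refine Summable.of_nonneg_of_le (fun n => ?_) (fun n => ?_) (summable_norm_rpow hP z)
    · by_cases h : n < m
      · simp [h]
      · rw [if_neg h]; positivity
    · by_cases h : n < m
      · rw [if_pos h]; positivity
      · rw [if_neg h]
  rw [← Summable.sum_add_tsum_nat_add m hsummable]
  have h0 : ∑ n ∈ Finset.range m, (if n < m then 0 else ‖(z : ℕ → ℝ) n‖ ^ P.toReal) = 0 := by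
    refine Finset.sum_eq_zero fun n hn => ?_
    simp only [Finset.mem_range] at hn
    simp [hn]
  rw [h0, zero_add]
  refine tsum_congr fun n => ?_
  have : ¬(n + m < m) := by omega
  rw [if_neg this, Nat.add_comm]

end LpAux
section EllF1Aux

lemma ellF_norm (x : ellF 1) : ‖x‖ = ∑' i : ℕ, |Fhat (x : ℕ → ℝ) i| := by
  have h : ‖x‖ = ‖ellFtoLp 1 x‖ := rfl
  rw [h, lp.norm_eq_tsum_rpow (by norm_num : 0 < (1 : ℝ≥0∞).toReal)]
  have hc : ∀ i, (((ellFtoLp 1) x : lp (fun _ : ℕ => ℝ) 1) : ℕ → ℝ) i = Fhat (x : ℕ → ℝ) i :=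
    fun i => rfl
  simp [Real.norm_eq_abs, hc]

lemma ellF_summable (x : ellF 1) : Summable fun i : ℕ => |Fhat (x : ℕ → ℝ) i| := by
  have h : Memℓp (Fhat (x : ℕ → ℝ)) 1 := x.2
  have h2 := (memℓp_gen_iff (by norm_num : 0 < (1 : ℝ≥0∞).toReal)).mp h
  simpa [Real.norm_eq_abs] using h2

lemma memℓp_single_one (k : ℕ) : Memℓp (Pi.single k 1 : ℕ → ℝ) 1 := by
  apply memℓp_gen
  apply summable_of_ne_finset_zero (s := {k})
  intro n hn
  simp only [Finset.mem_singleton] at hn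
  rw [Pi.single_eq_of_ne hn, norm_zero, Real.zero_rpow (by norm_num)]

noncomputable def Xe (k : ℕ) : ellF 1 :=
  ⟨Ginv (Pi.single k 1), by
    show Memℓp (Fhat (Ginv (Pi.single k 1))) 1
    rw [Fhat_Ginv]
    exact memℓp_single_one k⟩

lemma Fhat_Xe (k : ℕ) : Fhat ((Xe k : ellF 1) : ℕ → ℝ) = Pi.single k 1 := by
  show Fhat (Ginv (Pi.single k 1)) = _
  rw [Fhat_Ginv]

lemma norm_Xe (k : ℕ) : ‖Xe k‖ = 1 := by
  rw [ellF_norm, Fhat_Xe]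
  rw [tsum_eq_single k (fun b hb => by rw [Pi.single_eq_of_ne hb, abs_zero])]
  simp

lemma Xe_mem_sphere (k : ℕ) : Xe k ∈ Metric.sphere (0 : ellF 1) 1 := by
  rw [mem_sphere_zero_iff_norm]
  exact norm_Xe k

end EllF1Aux

section MoreLp

variable {P : ℝ≥0∞} [Fact (1 ≤ P)]

lemma shf_succ (hP : 0 < P.toReal) (m : ℕ) (z : lp (fun _ : ℕ => ℝ) P) :
    shf hP (m + 1) z = shf hP 1 (shf hP m z) := by
  apply Subtype.ext
  funext n
  show (z : ℕ → ℝ) (m + 1 + n) = (z : ℕ → ℝ) (m + (1 + n))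
  rw [Nat.add_assoc]

lemma norm_shf_succ_le (hP : 0 < P.toReal) (m : ℕ) (z : lp (fun _ : ℕ => ℝ) P) :
    ‖shf hP (m + 1) z‖ ≤ ‖shf hP m z‖ := by
  rw [shf_succ hP m z]
  exact norm_shf_le hP 1 _

lemma tendsto_norm_shf_zero (hP : 0 < P.toReal) (z : lp (fun _ : ℕ => ℝ) P) :
    Tendsto (fun m : ℕ => ‖shf hP m z‖) atTop (𝓝 0) := by
  have h1 := tendsto_tail_zero hP z
  have h2 : ContinuousAt (fun x : ℝ => x ^ (1 / P.toReal)) 0 :=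
    Real.continuousAt_rpow_const 0 _ (Or.inr (by positivity))
  have h3 := h2.tendsto.comp h1
  rw [Real.zero_rpow (one_div_pos.mpr hP).ne'] at h3
  exact h3.congr fun m => (norm_shf hP m z).symm

end MoreLp

lemma le_add_all {a b : ℝ} (h : ∀ ε : ℝ, 0 < ε → a ≤ b + ε) : a ≤ b := by
  by_contra hc
  push_neg at hc
  linarith [h ((a - b) / 2) (by linarith)]
set_option maxHeartbeats 1600000
theorem stmt15 (p : ℝ) (hp : 1 ≤ p) [Fact (1 ≤ ENNReal.ofReal p)]
    (A : ℕ → ℕ → ℝ)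
    (ha : ∀ n k : ℕ, Summable fun j : ℕ => |fibr (k + j + 1) ^ 2 / (fibr k * fibr (k + 1)) * A n (k + j)|)
    (L : ellF 1 →L[ℝ] lp (fun _ : ℕ => ℝ) (ENNReal.ofReal p))
    (hrep : ∀ x : ellF 1, ∀ n : ℕ, (L x : ℕ → ℝ) n = ∑' k : ℕ, A n k * (x : ℕ → ℝ) k) :
    Tendsto (fun m : ℕ => ⨆ k : ℕ, (∑' n : ℕ, |abar (A (m + n)) k| ^ p) ^ (1 / p)) atTop
      (𝓝 (hmnc (⇑L '' Metric.sphere 0 1))) ∧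
    ((∀ s : Set (ellF 1), Bornology.IsBounded s → TotallyBounded (⇑L '' s)) ↔
      Tendsto (fun m : ℕ => ⨆ k : ℕ, (∑' n : ℕ, |abar (A (m + n)) k| ^ p) ^ (1 / p)) atTop (𝓝 0)) := by
  classical
  have hp0 : (0:ℝ) < p := lt_of_lt_of_le one_pos hp
  have hPt : (ENNReal.ofReal p).toReal = p := ENNReal.toReal_ofReal hp0.le
  have hP : 0 < (ENNReal.ofReal p).toReal := by rw [hPt]; exact hp0
  set Q : Set (lp (fun _ : ℕ => ℝ) (ENNReal.ofReal p)) := ⇑L '' Metric.sphere 0 1 with hQdef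
  -- representation
  have hLx : ∀ x : ellF 1, ∀ n : ℕ,
      (L x : ℕ → ℝ) n = ∑' i : ℕ, abar (A n) i * Fhat (x : ℕ → ℝ) i := by
    intro x n
    rw [hrep x n]
    have hx : (fun k => A n k * (x : ℕ → ℝ) k)
        = fun k => A n k * Ginv (Fhat (x : ℕ → ℝ)) k := by
          exact congrArg (fun v : ℕ → ℝ => fun k => A n k * v k) (Ginv_Fhat (x : ℕ → ℝ)).symm
    rw [hx]
    exact key_id (A n) (ha n) (ellF_summable x)
  have hLXe : ∀ k n : ℕ, (L (Xe k) : ℕ → ℝ) n = abar (A n) k := by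
    intro k n
    rw [hLx, Fhat_Xe]
    rw [tsum_eq_single k (fun b hb => by rw [Pi.single_eq_of_ne hb, mul_zero])]
    simp
  -- the function g
  set g : ℕ → ℝ := fun m => ⨆ k : ℕ, ‖shf hP m (L (Xe k))‖ with hgdefn
  have hgdef : (fun m : ℕ => ⨆ k : ℕ, (∑' n : ℕ, |abar (A (m + n)) k| ^ p) ^ (1 / p)) = g := by
    funext m
    refine iSup_congr fun k => ?_
    rw [norm_shf hP, hPt]
    congr 1
    exact tsum_congr fun n => by rw [hLXe, Real.norm_eq_abs]
  have hb : ∀ m k : ℕ, ‖shf hP m (L (Xe k))‖ ≤ ‖L‖ := by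
    intro m k
    refine (norm_shf_le hP m _).trans ?_
    have h := L.le_opNorm (Xe k)
    rwa [norm_Xe, mul_one] at h
  have hbdd : ∀ m : ℕ, BddAbove (Set.range fun k : ℕ => ‖shf hP m (L (Xe k))‖) := by
    intro m
    exact ⟨‖L‖, by rintro _ ⟨k, rfl⟩; exact hb m k⟩
  have hg_nonneg : ∀ m, 0 ≤ g m :=
    fun m => le_trans (norm_nonneg _) (le_ciSup (hbdd m) 0)
  -- Minkowski-type upper bound
  have hup : ∀ (m : ℕ) (x : ellF 1), ‖x‖ = 1 → ‖shf hP m (L x)‖ ≤ g m := by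
    intro m x hx
    set y : ℕ → ℝ := Fhat (x : ℕ → ℝ) with hydef
    have hy : Summable fun i => |y i| := ellF_summable x
    have hy1 : ∑' i, |y i| = 1 := by rw [← ellF_norm x, hx]
    set c : ℕ → lp (fun _ : ℕ => ℝ) (ENNReal.ofReal p) := fun k => shf hP m (L (Xe k))
      with hcdef
    have hck : ∀ k, ‖c k‖ ≤ g m := fun k => le_ciSup (hbdd m) k
    have hnb : ∀ k, ‖y k • c k‖ ≤ |y k| * ‖L‖ := by
      intro k
      rw [norm_smul, Real.norm_eq_abs]
      exact mul_le_mul_of_nonneg_left (hb m k) (abs_nonneg _)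
    have hsm : Summable fun k => y k • c k :=
      Summable.of_norm_bounded (hy.mul_right _) hnb
    have hhs := hsm.hasSum
    have hSn : ∀ n : ℕ, ((∑' k, y k • c k : lp (fun _ : ℕ => ℝ) (ENNReal.ofReal p)) : ℕ → ℝ) n
        = (L x : ℕ → ℝ) (m + n) := by
      intro n
      have hev := hhs.map (AddMonoidHom.mk'
        (fun z : lp (fun _ : ℕ => ℝ) (ENNReal.ofReal p) => (z : ℕ → ℝ) n)
        (fun z w => by
          show ((z + w : lp (fun _ : ℕ => ℝ) (ENNReal.ofReal p)) : ℕ → ℝ) n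
            = (z : ℕ → ℝ) n + (w : ℕ → ℝ) n
          rw [lp.coeFn_add, Pi.add_apply])) (lp_eval_continuous n)
      have h1 : ∀ k, ((y k • c k : lp (fun _ : ℕ => ℝ) (ENNReal.ofReal p)) : ℕ → ℝ) n
          = abar (A (m + n)) k * y k := by
        intro k
        rw [lp.coeFn_smul, Pi.smul_apply, hcdef]
        show y k • (shf hP m (L (Xe k)) : ℕ → ℝ) n = _
        rw [shf_apply, hLXe, smul_eq_mul, mul_comm]
      calc ((∑' k, y k • c k : lp (fun _ : ℕ => ℝ) (ENNReal.ofReal p)) : ℕ → ℝ) n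
          = ∑' k, ((y k • c k : lp (fun _ : ℕ => ℝ) (ENNReal.ofReal p)) : ℕ → ℝ) n :=
            hev.tsum_eq.symm
        _ = ∑' k, abar (A (m + n)) k * y k := tsum_congr h1
        _ = (L x : ℕ → ℝ) (m + n) := (hLx x (m + n)).symm
    have hS : (∑' k, y k • c k) = shf hP m (L x) := by
      apply Subtype.ext
      funext n
      exact (hSn n).trans (shf_apply hP m (L x) n).symm
    rw [← hS]
    have hnorms : Summable fun k => ‖y k • c k‖ :=
      Summable.of_nonneg_of_le (fun k => norm_nonneg _) hnb (hy.mul_right _)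
    calc ‖∑' k, y k • c k‖ ≤ ∑' k, ‖y k • c k‖ := norm_tsum_le_tsum_norm hnorms
      _ ≤ ∑' k, |y k| * g m := by
          refine Summable.tsum_le_tsum (fun k => ?_) hnorms (hy.mul_right _)
          rw [norm_smul, Real.norm_eq_abs]
          exact mul_le_mul_of_nonneg_left (hck k) (abs_nonneg _)
      _ = (∑' k, |y k|) * g m := tsum_mul_right
      _ = g m := by rw [hy1, one_mul]
  have hQt : ∀ z ∈ Q, ∀ m, ‖shf hP m z‖ ≤ g m := by
    rintro z ⟨x, hx, rfl⟩ m
    exact hup m x (mem_sphere_zero_iff_norm.mp hx)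
  -- antitone and limit
  have hant : Antitone g := by
    refine antitone_nat_of_succ_le fun m => ?_
    refine ciSup_le fun k => ?_
    exact (norm_shf_succ_le hP m _).trans (le_ciSup (hbdd m) k)
  have hbelow : BddBelow (Set.range g) := ⟨0, by rintro _ ⟨m, rfl⟩; exact hg_nonneg m⟩
  have htend : Tendsto g atTop (𝓝 (⨅ m, g m)) := tendsto_atTop_ciInf hant hbelow
  -- covering construction
  have hcov : ∀ m : ℕ, ∀ ε : ℝ, 0 < ε →
      ∃ s : Finset (lp (fun _ : ℕ => ℝ) (ENNReal.ofReal p)),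
        Q ⊆ ⋃ x ∈ s, Metric.ball x (g m + ε) := by
    intro m ε hε
    have hK : IsCompact (⇑(truncL hP m) '' Metric.closedBall 0 ‖L‖) :=
      (isCompact_closedBall 0 ‖L‖).image (truncL hP m).continuous_of_finiteDimensional
    have hTB := Metric.totallyBounded_iff.mp hK.totallyBounded ε hε
    obtain ⟨tset, htfin, hcover⟩ := hTB
    refine ⟨htfin.toFinset, ?_⟩
    rintro z hzQ
    obtain ⟨x, hx, rfl⟩ := hzQ
    have hx1 : ‖x‖ = 1 := mem_sphere_zero_iff_norm.mp hx
    have h1 : truncL hP m (fun i : Fin m => (L x : ℕ → ℝ) i)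
        ∈ ⇑(truncL hP m) '' Metric.closedBall 0 ‖L‖ := by
      refine ⟨_, ?_, rfl⟩
      rw [Metric.mem_closedBall, dist_zero_right]
      refine (pi_norm_le_iff_of_nonneg (norm_nonneg L)).mpr fun i => ?_
      refine (lp.norm_apply_le_norm (by
        simp only [ne_eq, ENNReal.ofReal_eq_zero, not_le]; exact hp0) (L x) i).trans ?_
      have h := L.le_opNorm x
      rwa [hx1, mul_one] at h
    obtain ⟨cc, hcc, hdist⟩ := Set.mem_iUnion₂.mp (hcover h1)
    refine Set.mem_iUnion₂.mpr ⟨cc, Set.Finite.mem_toFinset htfin |>.mpr hcc, ?_⟩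
    rw [Metric.mem_ball]
    have htri := dist_triangle (L x) (truncL hP m (fun i : Fin m => (L x : ℕ → ℝ) i)) cc
    have hd1 : dist (L x) (truncL hP m (fun i : Fin m => (L x : ℕ → ℝ) i)) ≤ g m := by
      rw [dist_eq_norm, norm_sub_trunc hP m (L x), ← norm_shf hP m (L x)]
      exact hQt _ ⟨x, hx, rfl⟩ m
    have hd2 : dist (truncL hP m (fun i : Fin m => (L x : ℕ → ℝ) i)) cc < ε :=
      Metric.mem_ball.mp hdist
    linarith
  -- hmnc Q = ⨅ m, g m
  have hmnc_le : hmnc Q ≤ ⨅ m, g m := by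
    refine le_ciInf fun m => ?_
    refine le_add_all fun ε hε => ?_
    obtain ⟨s, hs⟩ := hcov m ε hε
    exact csInf_le ⟨0, fun r hr => hr.1.le⟩
      ⟨add_pos_of_nonneg_of_pos (hg_nonneg m) hε, s, hs⟩
  have hle_hmnc : (⨅ m, g m) ≤ hmnc Q := by
    have hmem : (‖L‖ + 1) ∈ {ε : ℝ | 0 < ε ∧ ∃ s : Finset (lp (fun _ : ℕ => ℝ) (ENNReal.ofReal p)),
        Q ⊆ ⋃ x ∈ s, Metric.ball x ε} := by
      refine ⟨by positivity, {0}, ?_⟩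
      rintro z ⟨x, hx, rfl⟩
      refine Set.mem_iUnion₂.mpr ⟨0, Finset.mem_singleton_self 0, ?_⟩
      rw [Metric.mem_ball, dist_zero_right]
      have h := L.le_opNorm x
      rw [mem_sphere_zero_iff_norm.mp hx, mul_one] at h
      linarith
    refine le_csInf ⟨_, hmem⟩ ?_
    rintro ε ⟨hε, s, hcover⟩
    refine le_add_all fun δ hδ => ?_
    have hh : Tendsto (fun m => ∑ cc ∈ s, ‖shf hP m cc‖) atTop (𝓝 0) := by
      have h := tendsto_finset_sum s
        (fun cc _ => tendsto_norm_shf_zero hP cc)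
      simpa using h
    obtain ⟨m, hm⟩ := (hh.eventually (gt_mem_nhds hδ)).exists
    refine le_trans (ciInf_le hbelow m) ?_
    have hgm : g m ≤ ε + ∑ cc ∈ s, ‖shf hP m cc‖ := by
      refine ciSup_le fun k => ?_
      have hkQ : L (Xe k) ∈ Q := ⟨Xe k, Xe_mem_sphere k, rfl⟩
      obtain ⟨cc, hcs, hdc⟩ := Set.mem_iUnion₂.mp (hcover hkQ)
      have h1 : ‖shf hP m (L (Xe k))‖
          ≤ ‖shf hP m cc‖ + ‖shf hP m (L (Xe k)) - shf hP m cc‖ := by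
        have h := norm_add_le (shf hP m cc) (shf hP m (L (Xe k)) - shf hP m cc)
        rwa [add_sub_cancel] at h
      have h2 : ‖shf hP m (L (Xe k)) - shf hP m cc‖ ≤ ‖L (Xe k) - cc‖ := by
        rw [← shf_sub hP m]
        exact norm_shf_le hP m _
      have h3 : ‖L (Xe k) - cc‖ < ε := by
        rw [← dist_eq_norm]
        exact Metric.mem_ball.mp hdc
      have h4 : ‖shf hP m cc‖ ≤ ∑ cc' ∈ s, ‖shf hP m cc'‖ :=
        Finset.single_le_sum (fun cc' _ => norm_nonneg _) hcs
      linarith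
    linarith
  have hQeq : hmnc Q = ⨅ m, g m := le_antisymm hmnc_le hle_hmnc
  have part1 : Tendsto (fun m : ℕ => ⨆ k : ℕ,
      (∑' n : ℕ, |abar (A (m + n)) k| ^ p) ^ (1 / p)) atTop (𝓝 (hmnc Q)) := by
    rw [hgdef, hQeq]
    exact htend
  refine ⟨part1, ?_, ?_⟩
  · -- compactness → limit 0
    intro hcomp
    have hQTB : TotallyBounded Q := hcomp _ Metric.isBounded_sphere
    have h0 : hmnc Q = 0 := by
      refine le_antisymm ?_ (Real.sInf_nonneg fun r hr => hr.1.le)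
      refine le_add_all fun ε hε => ?_
      rw [zero_add]
      obtain ⟨tset, htfin, hcover⟩ := Metric.totallyBounded_iff.mp hQTB ε hε
      refine csInf_le ⟨0, fun r hr => hr.1.le⟩ ⟨hε, htfin.toFinset, ?_⟩
      intro z hz
      obtain ⟨cc, hcc, hdd⟩ := Set.mem_iUnion₂.mp (hcover hz)
      exact Set.mem_iUnion₂.mpr ⟨cc, (Set.Finite.mem_toFinset htfin).mpr hcc, hdd⟩
    rw [← h0]
    exact part1
  · -- limit 0 → compactness
    intro hlim
    have hinf0 : hmnc Q = 0 := tendsto_nhds_unique part1 hlim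
    have hginf0 : (⨅ m, g m) = 0 := by rw [← hQeq]; exact hinf0
    have hQTB : TotallyBounded Q := by
      rw [Metric.totallyBounded_iff]
      intro ε hε
      have hlt : (⨅ m, g m) < ε / 2 := by rw [hginf0]; positivity
      obtain ⟨m, hm⟩ := exists_lt_of_ciInf_lt hlt
      obtain ⟨s, hs⟩ := hcov m (ε - g m) (by
        have := hg_nonneg m; linarith)
      refine ⟨↑s, s.finite_toSet, ?_⟩
      have : g m + (ε - g m) = ε := by ring
      rw [this] at hs
      intro z hz
      obtain ⟨cc, hcc, hdd⟩ := Set.mem_iUnion₂.mp (hs hz)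
      exact Set.mem_iUnion₂.mpr ⟨cc, by simpa using hcc, hdd⟩
    intro s hsb
    obtain ⟨R, hR⟩ := hsb.subset_closedBall 0
    have hsub : s ⊆ Metric.closedBall 0 (max R 0) :=
      hR.trans (Metric.closedBall_subset_closedBall (le_max_left _ _))
    have hKc : IsCompact (closure Q) := by
      rw [isCompact_iff_totallyBounded_isComplete]
      exact ⟨hQTB.closure, isClosed_closure.isComplete⟩
    have hC : IsCompact ((fun q : ℝ × lp (fun _ : ℕ => ℝ) (ENNReal.ofReal p) => q.1 • q.2) ''
        (Set.Icc (0:ℝ) (max R 0) ×ˢ closure Q)) :=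
      (isCompact_Icc.prod hKc).image (continuous_fst.smul continuous_snd)
    refine TotallyBounded.subset ?_ hC.totallyBounded
    rintro _ ⟨x, hxs, rfl⟩
    by_cases hx0 : x = 0
    · subst hx0
      refine ⟨((0:ℝ), L (Xe 0)), ⟨⟨le_refl 0, le_max_right R 0⟩,
        subset_closure ⟨Xe 0, Xe_mem_sphere 0, rfl⟩⟩, ?_⟩
      simp
    · have hxn : 0 < ‖x‖ := norm_pos_iff.mpr hx0
      have hu : (‖x‖⁻¹ • x) ∈ Metric.sphere (0 : ellF 1) 1 := by
        rw [mem_sphere_zero_iff_norm, norm_smul, norm_inv, norm_norm,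
          inv_mul_cancel₀ hxn.ne']
      have hxR : ‖x‖ ≤ max R 0 := by
        have h := hsub hxs
        rwa [Metric.mem_closedBall, dist_zero_right] at h
      refine ⟨(‖x‖, L (‖x‖⁻¹ • x)), ⟨⟨hxn.le, hxR⟩,
        subset_closure ⟨_, hu, rfl⟩⟩, ?_⟩
      show ‖x‖ • L (‖x‖⁻¹ • x) = L x
      rw [← map_smul, smul_inv_smul₀ hxn.ne']
end

section
/- Let y ∈ ℓ_1 and define x_n = Σ_{k=0}^n (f_{n+1}^2/(f_k f_{k+1})) y_k. Then F̂x = y, so x ∈ ℓ_1(F̂) and ‖x‖_{ℓ_1(F̂)} = ‖y‖_{ℓ_1}; in particular, for each k there exists c^{(k)} ∈ ℓ_1(F̂) of unit norm with F̂c^{(k)} = e^{(k)}, the k-th standard unit sequence, and c^{(k)}_n = f_{n+1}^2/(f_k f_{k+1}) for n ≥ k, c^{(k)}_n = 0 for n < k. -/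
open scoped BigOperators ENNReal
open Filter Topology

lemma key_inv (y x : ℕ → ℝ)
    (hx : ∀ n : ℕ, x n = ∑ k ∈ Finset.range (n + 1),
      fibr (n + 1) ^ 2 / (fibr k * fibr (k + 1)) * y k) :
    Fhat x = y := by
  funext n
  cases n with
  | zero =>
      have := hx 0
      simp [Fhat, this, fibr]
  | succ n =>
      have hne : ∀ m : ℕ, fibr m ≠ 0 := fun m => (fibr_pos m).ne'
      have hsum : (fibr (n+1)/fibr (n+2)) *
            ∑ k ∈ Finset.range (n+1), fibr (n+2)^2/(fibr k * fibr (k+1)) * y k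
          = (fibr (n+2)/fibr (n+1)) *
            ∑ k ∈ Finset.range (n+1), fibr (n+1)^2/(fibr k * fibr (k+1)) * y k := by
        rw [Finset.mul_sum, Finset.mul_sum]
        refine Finset.sum_congr rfl fun k _ => ?_
        field_simp [hne]
      show fibr (n + 1) / fibr (n + 2) * x (n + 1) - fibr (n + 2) / fibr (n + 1) * x n
          = y (n + 1)
      rw [hx (n+1), hx n, Finset.sum_range_succ, mul_add, hsum, add_sub_cancel_left]
      field_simp [hne]

theorem stmt19 :
    (∀ y x : ℕ → ℝ, Summable (fun n : ℕ => |y n|) →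
      (∀ n : ℕ, x n = ∑ k ∈ Finset.range (n + 1), fibr (n + 1) ^ 2 / (fibr k * fibr (k + 1)) * y k) →
      Fhat x = y ∧ Summable (fun n : ℕ => |Fhat x n|) ∧ ∑' n : ℕ, |Fhat x n| = ∑' n : ℕ, |y n|) ∧
    (∀ k : ℕ,
      Fhat (fun n => if k ≤ n then fibr (n + 1) ^ 2 / (fibr k * fibr (k + 1)) else 0) =
        (fun n => if n = k then (1 : ℝ) else 0) ∧
      ∑' n : ℕ, |Fhat (fun n => if k ≤ n then fibr (n + 1) ^ 2 / (fibr k * fibr (k + 1)) else 0) n| = 1) := by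
  constructor
  · intro y x hy hx
    have h := key_inv y x hx
    exact ⟨h, by rw [h]; exact hy, by rw [h]⟩
  · intro k
    set xk : ℕ → ℝ := fun n => if k ≤ n then fibr (n + 1) ^ 2 / (fibr k * fibr (k + 1)) else 0
      with hxk
    have hx : ∀ n : ℕ, xk n = ∑ j ∈ Finset.range (n + 1),
        fibr (n + 1) ^ 2 / (fibr j * fibr (j + 1)) * (if j = k then (1:ℝ) else 0) := by
      intro n
      simp only [mul_ite, mul_one, mul_zero, Finset.sum_ite_eq', Finset.mem_range,
        Nat.lt_succ_iff, hxk]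
    have h := key_inv (fun n => if n = k then (1:ℝ) else 0) xk hx
    refine ⟨h, ?_⟩
    rw [h]
    have : ∀ n : ℕ, |if n = k then (1:ℝ) else 0| = if n = k then (1:ℝ) else 0 := by
      intro n; split <;> simp
    simp only [this]
    exact tsum_ite_eq k 1
end
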